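/- arXiv:2401.03709 — 2 statements merged into one kernel-verified Lean document; each statement's English description precedes it below -/
import Mathlib

section
/- The cardinality of the kernel of β divides the cardinality of the cokernel of β; in particular ω := |coker β| / |ker β| is a positive integer. -/
open Module

/-- The endomorphism `F - 1` of `N`. -/
def frobSub {N : Type*} [AddCommGroup N] (F : AddAut N) : N →+ N :=
  AddEquiv.toAddMonoidHom (F : N ≃+ N) - AddMonoidHom.id N

/-- The invariants `N^F = ker (F - 1)`. -/
def invariantsOf {N : Type*} [AddCommGroup N] (F : AddAut N) : AddSubgroup N :=
  (frobSub F).ker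

/-- The coinvariants `N_F = N / im (F - 1)`. -/
abbrev coinvariantsOf {N : Type*} [AddCommGroup N] (F : AddAut N) :=
  N ⧸ (frobSub F).range

/-- The map `β : N^F → N_F` induced by the identity of `N`. -/
def betaHom {N : Type*} [AddCommGroup N] (F : AddAut N) :
    ↥(invariantsOf F) →+ coinvariantsOf F :=
  (QuotientAddGroup.mk' (frobSub F).range).comp (invariantsOf F).subtype

/-- The cokernel of `β`. -/
abbrev betaCoker {N : Type*} [AddCommGroup N] (F : AddAut N) :=
  coinvariantsOf F ⧸ (betaHom F).range

/-- `ω = |coker β| / |ker β|`. -/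
noncomputable def omegaOf {N : Type*} [AddCommGroup N] (F : AddAut N) : ℕ :=
  Nat.card (betaCoker F) / Nat.card ↥(betaHom F).ker

/-- `τ = rank N - rank N^F`. -/
noncomputable def tauOf {N : Type*} [AddCommGroup N] (F : AddAut N) : ℕ :=
  Module.finrank ℤ N - Module.finrank ℤ ↥(invariantsOf F)

section Aux
variable {N : Type*} [AddCommGroup N] (F : AddAut N)

lemma frobSub_apply (x : N) : frobSub F x = F x - x := rfl

lemma mem_invariantsOf {x : N} : x ∈ invariantsOf F ↔ F x = x := by
  simp [invariantsOf, AddMonoidHom.mem_ker, frobSub_apply, sub_eq_zero]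

noncomputable def nuMap (n : ℕ) : N →+ N :=
  ∑ i ∈ Finset.range n, AddEquiv.toAddMonoidHom ((i • F : AddAut N) : N ≃+ N)

lemma nuMap_apply (n : ℕ) (x : N) : nuMap F n x = ∑ i ∈ Finset.range n, (i • F) x := by
  simp [nuMap]

lemma nuMap_frobSub {n : ℕ} (hFn : n • F = 0) (y : N) : nuMap F n (frobSub F y) = 0 := by
  rw [nuMap_apply]
  have h : ∀ i ∈ Finset.range n, (i • F) (frobSub F y) = ((i+1) • F) y - (i • F) y := by
    intro i _
    rw [frobSub_apply, map_sub, succ_nsmul, AddAut.add_apply]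
  rw [Finset.sum_congr rfl h, Finset.sum_range_sub (fun i => (i • F) y), hFn]
  simp

lemma frobSub_nuMap {n : ℕ} (hFn : n • F = 0) (x : N) : frobSub F (nuMap F n x) = 0 := by
  rw [nuMap_apply, frobSub_apply, map_sum]
  have h : ∀ i ∈ Finset.range n, F ((i • F) x) = ((i+1) • F) x := by
    intro i _; rw [succ_nsmul', AddAut.add_apply]
  rw [Finset.sum_congr rfl h, ← Finset.sum_sub_distrib,
    Finset.sum_range_sub (fun i => (i • F) x), hFn]
  simp

lemma nuMap_mem_invariants {n : ℕ} (hFn : n • F = 0) (x : N) :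
    nuMap F n x ∈ invariantsOf F := frobSub_nuMap F hFn x

lemma nuMap_of_mem (n : ℕ) {x : N} (hx : x ∈ invariantsOf F) : nuMap F n x = n • x := by
  have hFx : F x = x := (mem_invariantsOf F).mp hx
  have h : ∀ i : ℕ, (i • F) x = x := by
    intro i
    induction i with
    | zero => simp
    | succ k ih => rw [succ_nsmul, AddAut.add_apply, hFx, ih]
  rw [nuMap_apply, Finset.sum_congr rfl (fun i _ => h i)]
  simp

lemma sub_nuMap_mem_range (n : ℕ) (x : N) :
    n • x - nuMap F n x ∈ (frobSub F).range := by
  have h : ∀ i : ℕ, x - (i • F) x ∈ (frobSub F).range := by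
    intro i
    induction i with
    | zero => simpa using (frobSub F).range.zero_mem
    | succ k ih =>
      have : x - ((k+1) • F) x = (x - (k • F) x) - frobSub F ((k • F) x) := by
        rw [frobSub_apply, succ_nsmul', AddAut.add_apply]; abel
      rw [this]
      exact sub_mem ih ⟨_, rfl⟩
  have : n • x - nuMap F n x = ∑ i ∈ Finset.range n, (x - (i • F) x) := by
    rw [Finset.sum_sub_distrib, nuMap_apply]
    simp
  rw [this]
  exact AddSubgroup.sum_mem _ (fun i _ => h i)

end Aux

lemma fg_addSubgroup {G : Type*} [AddCommGroup G] [AddGroup.FG G] (A : AddSubgroup G) :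
    AddGroup.FG ↥A := by
  haveI : Module.Finite ℤ G := Module.Finite.iff_addGroup_fg.mpr ‹_›
  have hfg : (AddSubgroup.toIntSubmodule A).FG := IsNoetherian.noetherian _
  have h2 : Module.Finite ℤ ↥(AddSubgroup.toIntSubmodule A) := Module.Finite.iff_fg.mpr hfg
  exact Module.Finite.iff_addGroup_fg.mp h2



lemma finite_of_fg_torsion' {G : Type*} [AddCommGroup G] [AddGroup.FG G]
    (h : ∀ x : G, IsOfFinAddOrder x) : Finite G :=
  AddCommGroup.finite_of_fg_torsion G h

lemma finite_of_fg_bounded {G : Type*} [AddCommGroup G] [AddGroup.FG G] {n : ℕ}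
    (hn : 0 < n) (h : ∀ x : G, n • x = 0) : Finite G :=
  finite_of_fg_torsion' (fun x => isOfFinAddOrder_iff_nsmul_eq_zero.mpr ⟨n, hn, h x⟩)

lemma fin_sub {G : Type*} [AddCommGroup G] [AddGroup.FG G] (A : AddSubgroup G) {n : ℕ}
    (hn : 0 < n) (h : ∀ x ∈ A, n • x = 0) : Finite ↥A := by
  haveI := fg_addSubgroup A
  exact finite_of_fg_bounded hn (fun x => Subtype.ext (by simpa using h x.1 x.2))



lemma coe_isOfFinAddOrder {G : Type*} [AddCommGroup G] {A : AddSubgroup G} {x : ↥A}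
    (h : IsOfFinAddOrder (x : G)) : IsOfFinAddOrder x := by
  obtain ⟨m, hm, hx⟩ := isOfFinAddOrder_iff_nsmul_eq_zero.mp h
  exact isOfFinAddOrder_iff_nsmul_eq_zero.mpr ⟨m, hm, Subtype.ext (by simpa using hx)⟩

lemma card_ker_dvd_card_coker {G : Type*} [AddCommGroup G] [AddGroup.FG G] (f : G →+ G)
    (hf : Finite ↥f.ker) : Nat.card ↥f.ker ∣ Nat.card (G ⧸ f.range) := by
  classical
  set T := AddCommGroup.torsion G with hT
  haveI : AddGroup.FG ↥T := fg_addSubgroup T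
  haveI hTfin : Finite ↥T :=
    AddCommGroup.finite_of_fg_torsion _ (fun x => coe_isOfFinAddOrder x.2)
  have hker_le : f.ker ≤ T := by
    intro x hx
    have : IsOfFinAddOrder (⟨x, hx⟩ : ↥f.ker) := isOfFinAddOrder_of_finite _
    obtain ⟨m, hm, hmx⟩ := isOfFinAddOrder_iff_nsmul_eq_zero.mp this
    refine isOfFinAddOrder_iff_nsmul_eq_zero.mpr ⟨m, hm, ?_⟩
    simpa using congrArg (Subtype.val) hmx
  have hstab : ∀ t ∈ T, f t ∈ T := by
    intro t ht
    obtain ⟨m, hm, hmt⟩ := isOfFinAddOrder_iff_nsmul_eq_zero.mp ht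
    exact isOfFinAddOrder_iff_nsmul_eq_zero.mpr
      ⟨m, hm, by rw [← map_nsmul, hmt, map_zero]⟩
  set fT : ↥T →+ ↥T := (f.domRestrict T).codRestrict T (fun t => hstab t.1 t.2) with hfT
  have hfT_coe : ∀ t : ↥T, (fT t : G) = f t := fun t => rfl
  set f0 : ↥T →+ G ⧸ f.range := (QuotientAddGroup.mk' f.range).comp T.subtype with hf0
  have hker0 : f0.ker = fT.range := by
    ext t
    simp only [AddMonoidHom.mem_ker, hf0, AddMonoidHom.comp_apply, AddSubgroup.coe_subtype,
      QuotientAddGroup.mk'_apply, QuotientAddGroup.eq_zero_iff, AddMonoidHom.mem_range]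
    constructor
    · rintro ⟨y, hy⟩
      obtain ⟨m, hm, hmt⟩ := isOfFinAddOrder_iff_nsmul_eq_zero.mp t.2
      have hmy : m • y ∈ f.ker := by
        rw [AddMonoidHom.mem_ker, map_nsmul, hy]
        exact hmt
      have hyT : y ∈ T := by
        obtain ⟨r, hr, hrmy⟩ := isOfFinAddOrder_iff_nsmul_eq_zero.mp (hker_le hmy)
        refine isOfFinAddOrder_iff_nsmul_eq_zero.mpr ⟨r * m, Nat.mul_pos hr hm, ?_⟩
        rw [mul_smul]; exact hrmy
      exact ⟨⟨y, hyT⟩, Subtype.ext (by rw [hfT_coe]; exact hy)⟩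
    · rintro ⟨s, rfl⟩
      exact ⟨s.1, (hfT_coe s).symm⟩
  have hkerT : fT.ker = f.ker.addSubgroupOf T := by
    ext t
    simp only [AddMonoidHom.mem_ker, AddSubgroup.mem_addSubgroupOf]
    constructor
    · intro h
      have := congrArg Subtype.val h
      rw [hfT_coe] at this
      exact this
    · intro h
      exact Subtype.ext (by rw [hfT_coe]; exact h)
  have c1 : Nat.card ↥T = Nat.card ↥f0.range * Nat.card ↥f0.ker := by
    rw [AddSubgroup.card_eq_card_quotient_mul_card_addSubgroup f0.ker,
      Nat.card_congr (QuotientAddGroup.quotientKerEquivRange f0).toEquiv]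
  have c2 : Nat.card ↥T = Nat.card ↥fT.range * Nat.card ↥fT.ker := by
    rw [AddSubgroup.card_eq_card_quotient_mul_card_addSubgroup fT.ker,
      Nat.card_congr (QuotientAddGroup.quotientKerEquivRange fT).toEquiv]
  have hcancel : Nat.card ↥fT.ker = Nat.card ↥f0.range := by
    have hpos : 0 < Nat.card ↥fT.range := Nat.card_pos
    have : Nat.card ↥fT.range * Nat.card ↥fT.ker
        = Nat.card ↥fT.range * Nat.card ↥f0.range := by
      rw [← c2, c1, hker0]; ring
    exact Nat.eq_of_mul_eq_mul_left hpos this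
  have hkerEq : Nat.card ↥f.ker = Nat.card ↥fT.ker := by
    rw [hkerT]
    exact (Nat.card_congr (AddSubgroup.addSubgroupOfEquivOfLe hker_le).toEquiv).symm
  rw [hkerEq, hcancel]
  exact AddSubgroup.card_addSubgroup_dvd_card f0.range

section Main
variable {N : Type*} [AddCommGroup N] (F : AddAut N)

-- card of ker β equals card of K ⊓ R
lemma card_ker_beta : Nat.card ↥(betaHom F).ker
    = Nat.card ↥(invariantsOf F ⊓ (frobSub F).range) := by
  have h : (betaHom F).ker
      = (invariantsOf F ⊓ (frobSub F).range).addSubgroupOf (invariantsOf F) := by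
    ext x
    simp only [AddMonoidHom.mem_ker, betaHom, AddMonoidHom.comp_apply,
      AddSubgroup.coe_subtype, AddSubgroup.mem_addSubgroupOf, AddSubgroup.mem_inf]
    rw [QuotientAddGroup.mk'_apply, QuotientAddGroup.eq_zero_iff]
    exact ⟨fun hr => ⟨x.2, hr⟩, fun hr => hr.2⟩
  rw [h]
  exact Nat.card_congr (AddSubgroup.addSubgroupOfEquivOfLe inf_le_left).toEquiv

-- card of coker β equals card of N / (K ⊔ R)
lemma card_coker_beta : Nat.card (betaCoker F)
    = Nat.card (N ⧸ (invariantsOf F ⊔ (frobSub F).range)) := by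
  have hrange : (betaHom F).range
      = (invariantsOf F ⊔ (frobSub F).range).map
          (QuotientAddGroup.mk' (frobSub F).range) := by
    rw [AddSubgroup.map_sup]
    have h1 : ((frobSub F).range).map (QuotientAddGroup.mk' (frobSub F).range) = ⊥ := by
      rw [AddSubgroup.map_eq_bot_iff, QuotientAddGroup.ker_mk']
    rw [h1, sup_bot_eq]
    ext q
    simp only [AddMonoidHom.mem_range, betaHom, AddMonoidHom.comp_apply,
      AddSubgroup.coe_subtype, AddSubgroup.mem_map]
    constructor
    · rintro ⟨x, rfl⟩; exact ⟨x.1, x.2, rfl⟩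
    · rintro ⟨x, hx, rfl⟩; exact ⟨⟨x, hx⟩, rfl⟩
  calc Nat.card (betaCoker F)
      = Nat.card ((N ⧸ (frobSub F).range) ⧸ ((invariantsOf F ⊔ (frobSub F).range).map
          (QuotientAddGroup.mk' (frobSub F).range))) :=
        Nat.card_congr (QuotientAddGroup.quotientAddEquivOfEq hrange).toEquiv
    _ = Nat.card (N ⧸ (invariantsOf F ⊔ (frobSub F).range)) :=
        Nat.card_congr (QuotientAddGroup.quotientQuotientEquivQuotient
          (frobSub F).range (invariantsOf F ⊔ (frobSub F).range) le_sup_right).toEquiv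

end Main

section Main2
variable {N : Type*} [AddCommGroup N] (F : AddAut N)

def psiMap : (N ⧸ invariantsOf F) →+ (N ⧸ invariantsOf F) :=
  QuotientAddGroup.map _ _ (frobSub F) (fun x hx => by
    simp only [AddSubgroup.mem_comap]
    rw [AddMonoidHom.mem_ker.mp hx]
    exact zero_mem _)

lemma psiMap_mk (x : N) : psiMap F (QuotientAddGroup.mk x) = QuotientAddGroup.mk (frobSub F x) :=
  rfl

def gLift : (N ⧸ invariantsOf F) →+ N :=
  QuotientAddGroup.lift _ (frobSub F) (le_refl _)

lemma gLift_mk (x : N) : gLift F (QuotientAddGroup.mk x) = frobSub F x := rfl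

lemma card_ker_psi : Nat.card ↥(invariantsOf F ⊓ (frobSub F).range)
    = Nat.card ↥(psiMap F).ker := by
  have hmem : ∀ q : ↥(psiMap F).ker, gLift F q.1 ∈ invariantsOf F ⊓ (frobSub F).range := by
    rintro ⟨q, hq⟩
    induction q using QuotientAddGroup.induction_on with
    | H x =>
      rw [AddMonoidHom.mem_ker, psiMap_mk, QuotientAddGroup.eq_zero_iff] at hq
      exact ⟨hq, ⟨x, rfl⟩⟩
  refine (Nat.card_congr (Equiv.ofBijective (fun q => ⟨gLift F q.1, hmem q⟩) ⟨?_, ?_⟩)).symm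
  · rintro ⟨q, hq⟩ ⟨q', hq'⟩ h
    simp only [Subtype.mk.injEq] at h ⊢
    induction q using QuotientAddGroup.induction_on with
    | H x =>
      induction q' using QuotientAddGroup.induction_on with
      | H y =>
        rw [gLift_mk, gLift_mk] at h
        refine (QuotientAddGroup.eq).mpr ?_
        have : frobSub F (-x + y) = 0 := by rw [map_add, map_neg, h]; abel
        exact this
  · rintro ⟨a, haK, y, hy⟩
    refine ⟨⟨QuotientAddGroup.mk y, ?_⟩, ?_⟩
    · rw [AddMonoidHom.mem_ker, psiMap_mk, hy, QuotientAddGroup.eq_zero_iff]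
      exact haK
    · apply Subtype.ext
      show gLift F (QuotientAddGroup.mk y) = a
      rw [gLift_mk, hy]

end Main2

section Main3
variable {N : Type*} [AddCommGroup N] (F : AddAut N)

lemma range_psi : (psiMap F).range
    = ((frobSub F).range).map (QuotientAddGroup.mk' (invariantsOf F)) := by
  ext q
  constructor
  · rintro ⟨p, rfl⟩
    induction p using QuotientAddGroup.induction_on with
    | H x => exact ⟨frobSub F x, ⟨x, rfl⟩, rfl⟩
  · rintro ⟨a, ⟨x, rfl⟩, rfl⟩
    exact ⟨QuotientAddGroup.mk x, rfl⟩

lemma card_coker_psi : Nat.card (N ⧸ (invariantsOf F ⊔ (frobSub F).range))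
    = Nat.card ((N ⧸ invariantsOf F) ⧸ (psiMap F).range) := by
  have hrange : (psiMap F).range
      = (invariantsOf F ⊔ (frobSub F).range).map
          (QuotientAddGroup.mk' (invariantsOf F)) := by
    rw [range_psi, AddSubgroup.map_sup]
    have h1 : (invariantsOf F).map (QuotientAddGroup.mk' (invariantsOf F)) = ⊥ := by
      rw [AddSubgroup.map_eq_bot_iff, QuotientAddGroup.ker_mk']
    rw [h1, bot_sup_eq]
  calc Nat.card (N ⧸ (invariantsOf F ⊔ (frobSub F).range))
      = Nat.card ((N ⧸ invariantsOf F) ⧸ ((invariantsOf F ⊔ (frobSub F).range).map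
          (QuotientAddGroup.mk' (invariantsOf F)))) :=
        (Nat.card_congr (QuotientAddGroup.quotientQuotientEquivQuotient
          (invariantsOf F) (invariantsOf F ⊔ (frobSub F).range) le_sup_left).toEquiv).symm
    _ = Nat.card ((N ⧸ invariantsOf F) ⧸ (psiMap F).range) :=
        Nat.card_congr (QuotientAddGroup.quotientAddEquivOfEq hrange.symm).toEquiv

end Main3


/-- The cardinality of the kernel of `β` divides the cardinality of its
cokernel; in particular `ω = |coker β| / |ker β|` is a positive integer. -/
theorem card_ker_beta_dvd_card_coker_beta {N : Type*} [AddCommGroup N] [AddGroup.FG N]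
    (F : AddAut N) (n : ℕ) (hn : 1 ≤ n) (hFn : n • F = 0) :
    Nat.card ↥(betaHom F).ker ∣ Nat.card (betaCoker F) ∧ 0 < omegaOf F := by
  have hn0 : 0 < n := hn
  have hbound : ∀ x ∈ invariantsOf F ⊓ (frobSub F).range, n • x = 0 := by
    intro x hx
    rw [AddSubgroup.mem_inf] at hx
    obtain ⟨hxK, y, rfl⟩ := hx
    rw [← nuMap_of_mem F n hxK, nuMap_frobSub F hFn y]
  haveI hAfin : Finite ↥(invariantsOf F ⊓ (frobSub F).range) := fin_sub _ hn0 hbound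
  have hkerpos : 0 < Nat.card ↥(betaHom F).ker := by
    rw [card_ker_beta]; exact Nat.card_pos
  have hcofin : Finite (N ⧸ (invariantsOf F ⊔ (frobSub F).range)) := by
    apply finite_of_fg_bounded hn0
    intro q
    induction q using QuotientAddGroup.induction_on with
    | H x =>
      have hmem : n • x ∈ invariantsOf F ⊔ (frobSub F).range := by
        have h1 := nuMap_mem_invariants F hFn x
        have h2 := sub_nuMap_mem_range F n x
        have h3 : n • x = nuMap F n x + (n • x - nuMap F n x) := by abel
        rw [h3]
        exact add_mem (AddSubgroup.mem_sup_left h1) (AddSubgroup.mem_sup_right h2)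
      rw [← QuotientAddGroup.mk'_apply, ← map_nsmul, QuotientAddGroup.mk'_apply,
        QuotientAddGroup.eq_zero_iff]
      exact hmem
  have hkercards : Nat.card ↥(betaHom F).ker = Nat.card ↥(psiMap F).ker := by
    rw [card_ker_beta, card_ker_psi]
  haveI hpsifin : Finite ↥(psiMap F).ker :=
    Nat.finite_of_card_ne_zero (by rw [← hkercards]; exact hkerpos.ne')
  have hdvd : Nat.card ↥(betaHom F).ker ∣ Nat.card (betaCoker F) := by
    rw [hkercards, card_coker_beta, card_coker_psi]
    exact card_ker_dvd_card_coker (psiMap F) hpsifin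
  refine ⟨hdvd, ?_⟩
  have hcpos : 0 < Nat.card (betaCoker F) := by
    rw [card_coker_beta]
    haveI := hcofin
    exact Nat.card_pos
  exact Nat.div_pos (Nat.le_of_dvd hcpos hdvd) hkerpos
end

section
/- If τ = 3, then ω ∈ {2, 4, 6, 8}. -/
attribute [local instance 2000] Submodule.module

open Module

section AuxCard

/-- The cardinality of the cokernel of an injective endomorphism of a finite free
`ℤ`-module equals the absolute value of its determinant. -/
lemma natCard_quotient_range_eq_natAbs_det {M : Type*} [AddCommGroup M] [Module ℤ M]
    [Module.Free ℤ M] [Module.Finite ℤ M]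
    (f : M →ₗ[ℤ] M) (hf : Function.Injective f) :
    Nat.card (M ⧸ LinearMap.range f) = (LinearMap.det f).natAbs := by
  classical
  let b := Module.Free.chooseBasis ℤ M
  set ι := Module.Free.ChooseBasisIndex ℤ M with hι
  obtain ⟨m, snf⟩ := Submodule.smithNormalForm b (LinearMap.range f)
  let e := LinearEquiv.ofInjective f hf
  have hm : m = Fintype.card ι := by
    simpa using Fintype.card_congr ((snf.bN.map e.symm).indexEquiv snf.bM)
  have hbij : Function.Bijective snf.f :=
    (Fintype.bijective_iff_injective_and_card snf.f).mpr ⟨snf.f.injective, by simpa using hm⟩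
  let e0 : Fin m ≃ ι := Equiv.ofBijective snf.f hbij
  let bN' := snf.bN.reindex e0
  let g := snf.bM.equiv bN' (Equiv.refl ι)
  have hfe : f = (LinearMap.range f).subtype ∘ₗ e.toLinearMap := by
    ext x; rfl
  have h1 : (LinearMap.det f).natAbs
      = (LinearMap.det ((LinearMap.range f).subtype ∘ₗ g.toLinearMap)).natAbs := by
    rw [congrArg LinearMap.det hfe]
    exact Int.natAbs_eq_iff_associated.mpr (LinearMap.associated_det_comp_equiv _ _ _)
  have h2 : LinearMap.toMatrix snf.bM snf.bM
      ((LinearMap.range f).subtype ∘ₗ g.toLinearMap)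
      = Matrix.diagonal (fun j => snf.a (e0.symm j)) := by
    ext i j
    rw [LinearMap.toMatrix_apply]
    have hg : g (snf.bM j) = bN' j := snf.bM.equiv_apply j bN' (Equiv.refl ι)
    have hco : ((bN' j : LinearMap.range f) : M) = snf.a (e0.symm j) • snf.bM j := by
      have h := snf.snf (e0.symm j)
      have : (bN' j : LinearMap.range f) = snf.bN (e0.symm j) := by
        simp [bN', Basis.reindex_apply]
      rw [this, h, show snf.f (e0.symm j) = j from e0.apply_symm_apply j]
      exact Int.cast_smul_eq_zsmul ℤ (snf.a (e0.symm j)) (snf.bM j)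
    simp only [LinearMap.comp_apply, LinearEquiv.coe_coe, hg, Submodule.coe_subtype, hco]
    rw [show ((snf.bM.repr (snf.a (e0.symm j) • snf.bM j)) i)
        = snf.a (e0.symm j) * (snf.bM.repr (snf.bM j)) i by
      rw [map_zsmul]
      simp [Basis.repr_self, Finsupp.smul_single, Finsupp.single_apply, mul_ite]]
    by_cases h : i = j
    · subst h; simp [Basis.repr_self]
    · simp [Matrix.diagonal_apply_ne _ h, Basis.repr_self, Finsupp.single_apply, Ne.symm h]
  have h3 : (LinearMap.det f).natAbs = (∏ i : Fin m, snf.a i).natAbs := by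
    rw [h1, ← LinearMap.det_toMatrix snf.bM, h2, Matrix.det_diagonal]
    congr 1
    exact Equiv.prod_comp e0.symm snf.a
  have h4 : Nat.card (M ⧸ LinearMap.range f) = (LinearMap.range f).toAddSubgroup.index := rfl
  have hz : Fintype.card ι - m = 0 := by omega
  have h5 : (LinearMap.range f).toAddSubgroup.index = ∏ i : Fin m, (snf.a i).natAbs := by
    rw [snf.toAddSubgroup_index_eq_pow_mul_prod, hz]
    simp [Ideal.span_singleton_toAddSubgroup_eq_zmultiples, Int.index_zmultiples]
  rw [h4, h5, h3]
  exact (map_prod Int.natAbsHom snf.a Finset.univ).symm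

/-- Evaluating the characteristic polynomial. -/
lemma charpoly_eval_eq_det {n : Type*} [DecidableEq n] [Fintype n] {R : Type*} [CommRing R]
    (M : Matrix n n R) (t : R) :
    M.charpoly.eval t = (t • (1 : Matrix n n R) - M).det := by
  rw [Matrix.charpoly, show Polynomial.eval t M.charmatrix.det
      = (Polynomial.evalRingHom t) M.charmatrix.det from rfl, RingHom.map_det]
  congr 1
  ext i j
  by_cases h : i = j
  · subst h
    simp [Matrix.charmatrix_apply_eq, Matrix.one_apply]
  · simp [Matrix.charmatrix_apply_ne _ _ _ h, Matrix.one_apply, h]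

/-- Roots of the characteristic polynomial of a matrix of finite order are roots of unity. -/
lemma root_charpoly_pow_eq_one {k : Type*} [DecidableEq k] [Fintype k]
    (A : Matrix k k ℂ) {n : ℕ} (hA : A ^ n = 1) {z : ℂ}
    (hz : A.charpoly.IsRoot z) : z ^ n = 1 := by
  have hdet : (z • (1 : Matrix k k ℂ) - A).det = 0 := by
    rw [← charpoly_eval_eq_det]; exact hz
  obtain ⟨v, hv, hmul⟩ := (Matrix.exists_mulVec_eq_zero_iff).mpr hdet
  have hAv : A.mulVec v = z • v := by
    rw [Matrix.sub_mulVec, Matrix.smul_mulVec, Matrix.one_mulVec, sub_eq_zero] at hmul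
    exact hmul.symm
  have hpow : ∀ m : ℕ, (A ^ m).mulVec v = z ^ m • v := by
    intro m
    induction m with
    | zero => simp [Matrix.one_mulVec]
    | succ m ih =>
      rw [pow_succ, ← Matrix.mulVec_mulVec, hAv, Matrix.mulVec_smul, ih, smul_smul,
        ← pow_succ']
  have h1 : v = z ^ n • v := by
    have := hpow n
    rwa [hA, Matrix.one_mulVec] at this
  have hsub : (z ^ n - 1) • v = 0 := by
    rw [sub_smul, one_smul, ← h1, sub_self]
  obtain ⟨i, hi⟩ := Function.ne_iff.mp hv
  have hzero : (z ^ n - 1) * v i = 0 := by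
    have := congrFun hsub i
    simpa using this
  rcases mul_eq_zero.mp hzero with h | h
  · exact sub_eq_zero.mp h
  · exact absurd h hi

/-- The arithmetic heart: a monic integer cubic all of whose complex roots are `n`-th
roots of unity, and which does not vanish at `1`, has `|f(1)| ∈ {2,4,6,8}`. -/
lemma cubic_eval_one_mem (f : Polynomial ℤ) (hmonic : f.Monic) (hdeg : f.natDegree = 3)
    {n : ℕ} (hn : 1 ≤ n)
    (hroots : ∀ z ∈ (f.map (Int.castRingHom ℂ)).roots, z ^ n = 1)
    (hne : f.eval 1 ≠ 0) :
    (f.eval 1).natAbs ∈ ({2, 4, 6, 8} : Set ℕ) := by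
  classical
  set fc := f.map (Int.castRingHom ℂ) with hfc
  have hfcm : fc.Monic := hmonic.map _
  have hfcdeg : fc.natDegree = 3 := by
    rw [hfc, Polynomial.natDegree_map_eq_of_injective (Int.cast_injective (α := ℂ))]
    exact hdeg
  have hsplits : fc.Splits := IsAlgClosed.splits fc
  have hcard : Multiset.card fc.roots = 3 := by
    rw [Polynomial.splits_iff_card_roots.mp hsplits, hfcdeg]
  obtain ⟨a, b, c, habc⟩ := Multiset.card_eq_three.mp hcard
  have hprod : fc = (Polynomial.X - Polynomial.C a) * (Polynomial.X - Polynomial.C b)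
      * (Polynomial.X - Polynomial.C c) := by
    have := hsplits.eq_prod_roots_of_monic hfcm
    rw [habc] at this
    rw [this]
    simp [Multiset.map_cons, Multiset.prod_cons]
    ring
  -- all roots are roots of unity, so have absolute value 1
  have habs : ∀ z : ℂ, z ∈ fc.roots → ‖z‖ = 1 := by
    intro z hz
    have hzn : z ^ n = 1 := hroots z hz
    have : ‖z‖ ^ n = 1 := by
      rw [← norm_pow, hzn, norm_one]
    have h0 : (0 : ℝ) ≤ ‖z‖ := norm_nonneg z
    rcases pow_eq_one_iff_cases.mp this with h | h | h
    · omega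
    · exact h
    · nlinarith
  have hmema : a ∈ fc.roots := by rw [habc]; simp
  have hmemb : b ∈ fc.roots := by rw [habc]; simp
  have hmemc : c ∈ fc.roots := by rw [habc]; simp
  have ha : ‖a‖ = 1 := habs a hmema
  have hb : ‖b‖ = 1 := habs b hmemb
  have hc : ‖c‖ = 1 := habs c hmemc
  have hac : a * (starRingEnd ℂ) a = 1 := by
    rw [Complex.mul_conj, ← Complex.sq_norm, ha]; norm_num
  have hbc : b * (starRingEnd ℂ) b = 1 := by
    rw [Complex.mul_conj, ← Complex.sq_norm, hb]; norm_num
  have hcc : c * (starRingEnd ℂ) c = 1 := by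
    rw [Complex.mul_conj, ← Complex.sq_norm, hc]; norm_num
  -- coefficients
  set p := f.coeff 2 with hpdef
  set q := f.coeff 1 with hqdef
  set r := f.coeff 0 with hrdef
  have hexp : fc = Polynomial.X ^ 3
      - Polynomial.C (a + b + c) * Polynomial.X ^ 2
      + Polynomial.C (a * b + a * c + b * c) * Polynomial.X
      - Polynomial.C (a * b * c) := by
    rw [hprod]; simp only [map_add, map_mul]; ring
  have hp : (p : ℂ) = -(a + b + c) := by
    have h1 : fc.coeff 2 = (p : ℂ) := by rw [hfc, Polynomial.coeff_map]; rfl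
    rw [← h1, hexp]
    simp [Polynomial.coeff_sub, Polynomial.coeff_add, Polynomial.coeff_X_pow, add_mul,
      Polynomial.coeff_C_mul, Polynomial.coeff_C, Polynomial.coeff_X]
  have hq : (q : ℂ) = a * b + a * c + b * c := by
    have h1 : fc.coeff 1 = (q : ℂ) := by rw [hfc, Polynomial.coeff_map]; rfl
    rw [← h1, hexp]
    simp [Polynomial.coeff_sub, Polynomial.coeff_add, Polynomial.coeff_X_pow, add_mul,
      Polynomial.coeff_C_mul, Polynomial.coeff_C, Polynomial.coeff_X]
  have hr : (r : ℂ) = -(a * b * c) := by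
    have h1 : fc.coeff 0 = (r : ℂ) := by rw [hfc, Polynomial.coeff_map]; rfl
    rw [← h1, hexp]
    simp [Polynomial.coeff_sub, Polynomial.coeff_add, Polynomial.coeff_X_pow, add_mul,
      Polynomial.coeff_C_mul, Polynomial.coeff_C, Polynomial.coeff_X]
  -- |r| = 1
  have hrabs : r = 1 ∨ r = -1 := by
    have h1 : ‖(r : ℂ)‖ = 1 := by
      rw [hr, norm_neg, norm_mul, norm_mul, ha, hb, hc]
      norm_num
    rw [Complex.norm_intCast] at h1
    rcases (abs_eq (by norm_num : (0:ℝ) ≤ 1)).mp h1 with h | h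
    · left; exact_mod_cast h
    · right; exact_mod_cast h
  -- q = r * p
  have hqrp : q = r * p := by
    have key : (q : ℂ) = (r : ℂ) * (p : ℂ) := by
      have hconj : (starRingEnd ℂ) ((p : ℂ)) = (p : ℂ) := by
        exact map_intCast (starRingEnd ℂ) p
      have hconjsum : (starRingEnd ℂ) (a + b + c) = -(p : ℂ) := by
        rw [show (a + b + c) = -(p:ℂ) by linear_combination hp]
        rw [map_neg, hconj]
      have expand : (q : ℂ) = (a * b * c) * ((starRingEnd ℂ) a + (starRingEnd ℂ) b
          + (starRingEnd ℂ) c) := by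
        rw [hq]
        have e1 := hac; have e2 := hbc; have e3 := hcc
        linear_combination (-(b * c)) * e1 + (-(a * c)) * e2 + (-(a * b)) * e3
      rw [expand, ← map_add, ← map_add, hconjsum, hr]
      ring
    exact_mod_cast key
  -- f(1) = 1 + p + q + r
  have heval1 : f.eval 1 = 1 + p + q + r := by
    have h1 : ((f.eval 1 : ℤ) : ℂ) = fc.eval 1 := by
      rw [hfc, Polynomial.eval_one_map]; rfl
    have h2 : fc.eval 1 = (1 - a) * (1 - b) * (1 - c) := by
      rw [hprod]; simp
    have h3 : ((1 : ℂ) - a) * (1 - b) * (1 - c) = 1 + (p:ℂ) + (q:ℂ) + (r:ℂ) := by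
      linear_combination -hp - hq - hr
    have : ((f.eval 1 : ℤ) : ℂ) = ((1 + p + q + r : ℤ) : ℂ) := by
      rw [h1, h2, h3]; push_cast; ring
    exact_mod_cast this
  -- |p| ≤ 3
  have hpbound : -3 ≤ p ∧ p ≤ 3 := by
    have habs3 : ‖(p : ℂ)‖ ≤ 3 := by
      rw [hp]
      calc ‖-(a + b + c)‖ = ‖a + b + c‖ := norm_neg _
        _ ≤ ‖a + b‖ + ‖c‖ := norm_add_le _ _
        _ ≤ ‖a‖ + ‖b‖ + ‖c‖ := by
              linarith [norm_add_le a b]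
        _ = 3 := by rw [ha, hb, hc]; norm_num
    rw [Complex.norm_intCast] at habs3
    have h' := abs_le.mp habs3
    exact ⟨by exact_mod_cast h'.1, by exact_mod_cast h'.2⟩
  clear_value p q r
  obtain ⟨hp1, hp2⟩ := hpbound
  rcases hrabs with hr1 | hr1
  · -- r = 1 : f(1) = 2 + 2p
    have hq1 : q = p := by rw [hqrp, hr1, one_mul]
    have hfe : f.eval 1 = 2 + 2 * p := by rw [heval1, hq1, hr1]; ring
    rw [hfe] at hne ⊢
    rcases (by omega : p = -3 ∨ p = -2 ∨ p = -1 ∨ p = 0 ∨ p = 1 ∨ p = 2 ∨ p = 3)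
        with h|h|h|h|h|h|h <;> subst h <;>
      first
        | (simp only [Set.mem_insert_iff, Set.mem_singleton_iff]; decide)
        | exact absurd (by norm_num) hne
  · -- r = -1 : f(1) = 0, contradiction
    have hq1 : q = -p := by rw [hqrp, hr1]; ring
    have : f.eval 1 = 0 := by rw [heval1, hq1, hr1]; ring
    exact absurd this hne

end AuxCard

/-- If `τ = 3`, then `ω ∈ {2, 4, 6, 8}`. -/
theorem omega_of_tau_eq_three {N : Type*} [AddCommGroup N]
    [Module.Free ℤ N] [Module.Finite ℤ N]
    (F : AddAut N) (n : ℕ) (hn : 1 ≤ n) (hFn : n • F = 0)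
    (hτ : tauOf F = 3) :
    omegaOf F ∈ ({2, 4, 6, 8} : Set ℕ) := by
  classical
  -- the key vanishing lemma: a fixed vector in the image of `F - 1` is zero
  have key : ∀ x : N, F x = x → x ∈ (frobSub F).range → x = 0 := by
    intro x hx hxr
    obtain ⟨y, hy⟩ := hxr
    have hy' : F y - y = x := hy
    have hfix : ∀ m : ℕ, (m • F) x = x := by
      intro m
      induction m with
      | zero => rw [zero_nsmul]; rfl
      | succ m ih => rw [succ_nsmul, AddAut.add_apply, hx, ih]
    have htel : ∀ m : ℕ, (m • F) y - y = m • x := by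
      intro m
      induction m with
      | zero => rw [zero_nsmul, zero_smul]; exact sub_eq_zero.mpr rfl
      | succ m ih =>
        have h1 : ((m + 1) • F) y = (m • F) (F y) := by rw [succ_nsmul, AddAut.add_apply]
        have h2 : F y = x + y := by rw [← hy']; abel
        have h3 : (m • F) (x + y) = (m • F) x + (m • F) y :=
          map_add ((m • F : AddAut N) : N ≃+ N) x y
        rw [h1, h2, h3, hfix m, succ_nsmul, ← ih]
        abel
    have hnx : n • x = 0 := by
      have h := htel n
      rw [hFn] at h
      have h1 : (0 : AddAut N) y = y := rfl
      rw [h1, sub_self] at h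
      exact h.symm
    have hz : (n : ℤ) • x = 0 := by rw [natCast_zsmul]; exact hnx
    rcases smul_eq_zero.mp hz with h | h
    · exfalso
      have : (n : ℤ) ≠ 0 := by exact_mod_cast (by omega : n ≠ 0)
      exact this h
    · exact h
  -- β is injective
  have hkerbot : (betaHom F).ker = ⊥ := by
    rw [AddSubgroup.eq_bot_iff_forall]
    intro x hxk
    have hx0 : (x : N) ∈ (frobSub F).range := by
      have h : QuotientAddGroup.mk' (frobSub F).range (x : N) = 0 := hxk
      exact (QuotientAddGroup.eq_zero_iff _).mp h
    have hfix : F (x : N) = (x : N) := by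
      have hx : frobSub F (x : N) = 0 := x.2
      have : F (x : N) - (x : N) = 0 := hx
      exact sub_eq_zero.mp this
    exact Subtype.ext (key x hfix hx0)
  have hcardker : Nat.card ↥(betaHom F).ker = 1 := by
    rw [hkerbot]
    exact Nat.card_eq_one_iff_unique.mpr
      ⟨⟨fun a b => Subtype.ext (((AddSubgroup.mem_bot).mp a.2).trans
        ((AddSubgroup.mem_bot).mp b.2).symm)⟩, ⟨⟨0, AddSubgroup.zero_mem ⊥⟩⟩⟩
  have homega : omegaOf F = Nat.card (betaCoker F) := by
    rw [omegaOf, hcardker, Nat.div_one]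
  -- pass to the quotient `N / (N^F + im(F-1))`
  set R : AddSubgroup N := (frobSub F).range with hR
  set S : AddSubgroup N := invariantsOf F ⊔ R with hS
  have hrange : (betaHom F).range = AddSubgroup.map (QuotientAddGroup.mk' R) S := by
    have h1 : (betaHom F).range = AddSubgroup.map (QuotientAddGroup.mk' R) (invariantsOf F) := by
      rw [betaHom, AddMonoidHom.range_comp, AddSubgroup.range_subtype]
    have h2 : AddSubgroup.map (QuotientAddGroup.mk' R) R = ⊥ := by
      rw [eq_bot_iff]
      rintro z ⟨w, hw, rfl⟩
      simpa [AddSubgroup.mem_bot, QuotientAddGroup.eq_zero_iff] using hw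
    rw [hS, AddSubgroup.map_sup, h2, sup_bot_eq, h1]
  have hcard1 : Nat.card (betaCoker F) = Nat.card (N ⧸ S) := by
    have hty : Nat.card (betaCoker F)
        = Nat.card ((N ⧸ R) ⧸ AddSubgroup.map (QuotientAddGroup.mk' R) S) :=
      congrArg (fun H : AddSubgroup (N ⧸ R) => Nat.card ((N ⧸ R) ⧸ H)) hrange
    rw [hty]
    exact Nat.card_congr
      (QuotientAddGroup.quotientQuotientEquivQuotient R S le_sup_right).toEquiv
  -- switch to submodules
  set K : Submodule ℤ N := AddSubgroup.toIntSubmodule (invariantsOf F) with hK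
  set Rs : Submodule ℤ N := AddSubgroup.toIntSubmodule R with hRs
  set Ss : Submodule ℤ N := AddSubgroup.toIntSubmodule S with hSs
  have hSsup : Ss = K ⊔ Rs := by
    rw [hSs, hS, hK, hRs]
    exact map_sup AddSubgroup.toIntSubmodule _ _
  have hSs_add : Ss.toAddSubgroup = S := by ext x; rfl
  have hcardS : Nat.card (N ⧸ S) = Nat.card (N ⧸ Ss) := by
    have h : Nat.card (N ⧸ Ss) = Nat.card (N ⧸ Ss.toAddSubgroup) := rfl
    rw [h, hSs_add]
  -- the endomorphisms, as linear maps
  let φl : N →ₗ[ℤ] N := (frobSub F).toIntLinearMap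
  let Fl : N →ₗ[ℤ] N := ((F : N ≃+ N).toAddMonoidHom).toIntLinearMap
  have hRs_range : Rs = LinearMap.range φl := by
    ext x
    constructor
    · rintro ⟨y, hy⟩
      exact ⟨y, hy⟩
    · rintro ⟨y, hy⟩
      exact ⟨y, hy⟩
  have hφK : K ≤ Submodule.comap φl K := by
    intro x hx
    have h : frobSub F x = 0 := hx
    show φl x ∈ K
    have : φl x = 0 := h
    rw [this]
    exact K.zero_mem
  have hFK : K ≤ Submodule.comap Fl K := by
    intro x hx
    have h : frobSub F x = 0 := hx
    have hfx : F x = x := sub_eq_zero.mp h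
    show Fl x ∈ K
    have : Fl x = x := hfx
    rw [this]
    exact hx
  let ψ : N ⧸ K →ₗ[ℤ] N ⧸ K := Submodule.mapQ K K φl hφK
  let g : N ⧸ K →ₗ[ℤ] N ⧸ K := Submodule.mapQ K K Fl hFK
  have hψg : ψ = g - LinearMap.id := by
    apply Submodule.linearMap_qext
    ext x
    simp only [LinearMap.comp_apply, Submodule.mkQ_apply, Submodule.mapQ_apply,
      LinearMap.sub_apply, LinearMap.id_apply]
    rw [show ψ (Submodule.Quotient.mk x) = Submodule.Quotient.mk (φl x) from
        Submodule.mapQ_apply K K φl x,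
      show g (Submodule.Quotient.mk x) = Submodule.Quotient.mk (Fl x) from
        Submodule.mapQ_apply K K Fl x,
      show φl x = Fl x - x from rfl, Submodule.Quotient.mk_sub]
  -- ψ is injective
  have hψinj : Function.Injective ψ := by
    rw [← LinearMap.ker_eq_bot]
    rw [Submodule.eq_bot_iff]
    intro z hz
    obtain ⟨x, rfl⟩ := Submodule.mkQ_surjective K z
    have h0 : ψ (K.mkQ x) = 0 := hz
    rw [show K.mkQ x = Submodule.Quotient.mk x from rfl, Submodule.mapQ_apply] at h0
    have hmem : φl x ∈ K := (Submodule.Quotient.mk_eq_zero K).mp h0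
    have h1 : F (φl x) = φl x := by
      have : frobSub F (φl x) = 0 := hmem
      exact sub_eq_zero.mp this
    have h2 : φl x ∈ (frobSub F).range := ⟨x, rfl⟩
    have h3 : φl x = 0 := key _ h1 h2
    have h4 : x ∈ K := by
      show frobSub F x = 0
      exact h3
    exact (Submodule.Quotient.mk_eq_zero K).mpr h4
  -- instances on the quotient
  haveI hNZ : NoZeroSMulDivisors ℤ (N ⧸ K) := by
    refine ⟨fun {c z} hcz => ?_⟩
    by_cases hc : c = 0
    · exact Or.inl hc
    · right
      obtain ⟨x, rfl⟩ := Submodule.mkQ_surjective K z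
      have h0 : K.mkQ (c • x) = 0 := by rw [map_smul]; exact hcz
      have hmem : c • x ∈ K := (Submodule.Quotient.mk_eq_zero K).mp h0
      have h1 : frobSub F (c • x) = 0 := hmem
      have h2 : c • frobSub F x = 0 := by
        rw [← map_zsmul (frobSub F) c x]
        exact h1
      have h3 : frobSub F x = 0 := by
        rcases smul_eq_zero.mp h2 with h | h
        · exact absurd h hc
        · exact h
      exact (Submodule.Quotient.mk_eq_zero K).mpr h3
  haveI hNF : Module.Free ℤ (N ⧸ K) := Module.free_of_finite_type_torsion_free'
  -- rank computation
  let eK : ↥(invariantsOf F) ≃ₗ[ℤ] ↥K :=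
    { toFun := fun x => ⟨x.1, x.2⟩
      invFun := fun x => ⟨x.1, x.2⟩
      left_inv := fun x => rfl
      right_inv := fun x => rfl
      map_add' := fun x y => rfl
      map_smul' := fun c x => rfl }
  have hrank3 : Module.finrank ℤ (N ⧸ K) = 3 := by
    have h1 := Submodule.finrank_quotient_add_finrank K
    have h2 : Module.finrank ℤ ↥(invariantsOf F) = Module.finrank ℤ ↥K :=
      eK.finrank_eq
    rw [tauOf] at hτ
    omega
  let bQ : Basis (Fin 3) ℤ (N ⧸ K) := (Module.finBasis ℤ (N ⧸ K)).reindex (finCongr hrank3)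
  -- matrices
  let A : Matrix (Fin 3) (Fin 3) ℤ := LinearMap.toMatrix bQ bQ g
  have hgk : ∀ (k : ℕ) (x : N), (g ^ k) (Submodule.Quotient.mk x)
      = Submodule.Quotient.mk ((k • F) x) := by
    intro k
    induction k with
    | zero =>
      intro x
      rw [pow_zero, zero_nsmul]
      rfl
    | succ k ih =>
      intro x
      rw [pow_succ, Module.End.mul_apply]
      have h1 : g (Submodule.Quotient.mk x) = Submodule.Quotient.mk (F x) :=
        Submodule.mapQ_apply K K Fl x
      rw [h1, ih (F x), succ_nsmul, AddAut.add_apply]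
  have hgn : g ^ n = 1 := by
    apply LinearMap.ext
    intro z
    obtain ⟨x, rfl⟩ := Submodule.mkQ_surjective K z
    rw [show K.mkQ x = Submodule.Quotient.mk x from rfl, hgk n x, hFn]
    rfl
  have hApow : A ^ n = 1 := by
    have hAeq : A = LinearMap.toMatrixAlgEquiv bQ g := rfl
    rw [hAeq, ← map_pow, hgn, map_one]
  have hψmat : LinearMap.toMatrix bQ bQ ψ = A - 1 := by
    rw [hψg, map_sub, LinearMap.toMatrix_id]
  have hdetψ : LinearMap.det ψ = (A - 1).det := by
    rw [← LinearMap.det_toMatrix bQ ψ, hψmat]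
  -- the characteristic polynomial
  set f : Polynomial ℤ := A.charpoly with hf
  have hdeg : f.natDegree = 3 := by
    rw [hf, Matrix.charpoly_natDegree_eq_dim]
    simp
  have hf1 : f.eval 1 = ((1 : Matrix (Fin 3) (Fin 3) ℤ) - A).det := by
    rw [hf, charpoly_eval_eq_det, one_smul]
  have hsign : ((1 : Matrix (Fin 3) (Fin 3) ℤ) - A).det = -((A - 1).det) := by
    rw [show (1 : Matrix (Fin 3) (Fin 3) ℤ) - A = -(A - 1) from (neg_sub _ _).symm,
      Matrix.det_neg]
    simp
  have hne : f.eval 1 ≠ 0 := by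
    intro h0
    have hdet0 : (A - 1).det = 0 := by
      have := hf1.symm.trans h0
      rw [hsign] at this
      omega
    obtain ⟨v, hv, hmul⟩ := Matrix.exists_mulVec_eq_zero_iff.mpr hdet0
    set y : N ⧸ K := bQ.equivFun.symm v with hy
    have hy0 : y ≠ 0 := by
      intro h
      apply hv
      have h2 : bQ.equivFun y = bQ.equivFun 0 := congrArg _ h
      rw [hy, LinearEquiv.apply_symm_apply, map_zero] at h2
      exact h2
    have hψy : ψ y = 0 := by
      have hψ_eq : ψ = Matrix.toLin bQ bQ (A - 1) := by
        rw [← hψmat, Matrix.toLin_toMatrix]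
      rw [hψ_eq, Matrix.toLin_apply]
      have hrepr : ⇑(bQ.repr y) = v := by
        rw [show ⇑(bQ.repr y) = bQ.equivFun y from rfl, hy,
          LinearEquiv.apply_symm_apply]
      rw [hrepr, hmul]
      simp
    exact hy0 (hψinj (by rw [hψy, map_zero]))
  -- roots of the characteristic polynomial are n-th roots of unity
  have hroots : ∀ z ∈ (f.map (Int.castRingHom ℂ)).roots, z ^ n = 1 := by
    intro z hz
    have hAc : (A.map (Int.castRingHom ℂ)) ^ n = 1 := by
      have h := congrArg (RingHom.mapMatrix (Int.castRingHom ℂ)) hApow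
      rw [map_pow, map_one] at h
      rw [RingHom.mapMatrix_apply] at h
      exact h
    apply root_charpoly_pow_eq_one _ hAc
    rw [Matrix.charpoly_map]
    exact Polynomial.isRoot_of_mem_roots hz
  have harith := cubic_eval_one_mem f (A.charpoly_monic) hdeg hn hroots hne
  -- the cardinality chain
  have hrangeψ : LinearMap.range ψ = Submodule.map K.mkQ Ss := by
    have hmk : ψ ∘ₗ K.mkQ = K.mkQ ∘ₗ φl := Submodule.mapQ_mkQ K K φl
    have h1 : LinearMap.range ψ = LinearMap.range (ψ ∘ₗ K.mkQ) :=
      (LinearMap.range_comp_of_range_eq_top ψ (Submodule.range_mkQ K)).symm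
    have h2 : Submodule.map K.mkQ K = ⊥ := by
      rw [eq_bot_iff]
      rintro z ⟨w, hw, rfl⟩
      simpa using (Submodule.Quotient.mk_eq_zero K).mpr hw
    rw [h1, hmk, LinearMap.range_comp, ← hRs_range, hSsup, Submodule.map_sup, h2, bot_sup_eq]
  have hcard2 : Nat.card (N ⧸ Ss) = Nat.card ((N ⧸ K) ⧸ LinearMap.range ψ) := by
    have hKS : K ≤ Ss := by rw [hSsup]; exact le_sup_left
    rw [hrangeψ]
    exact (Nat.card_congr (Submodule.quotientQuotientEquivQuotient K Ss hKS).toEquiv).symm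
  have hcard3 : Nat.card ((N ⧸ K) ⧸ LinearMap.range ψ) = (LinearMap.det ψ).natAbs :=
    natCard_quotient_range_eq_natAbs_det ψ hψinj
  have hfinal : omegaOf F = (f.eval 1).natAbs := by
    rw [homega, hcard1, hcardS, hcard2, hcard3, hdetψ, hf1, hsign, Int.natAbs_neg]
  rw [hfinal]
  exact harith
end
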